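/- Fix p ∈ [0, 1/2], n, d ∈ ℕ with n + 1 ≤ d, let s ∈ {−1,+1}^n, let k : {1,…,n} → {2,…,d} be injective, and let X ∈ ℝ^{n×d} have rows xⱼ := sⱼ e₁ + e_{k(j)}. Then there exists w ∈ ℝ^d with ⟨w, xⱼ⟩ = 1 for every j ∈ {1,…,n} (so w is an empirical risk minimizer fitting the training set exactly with zero square loss), yet P_{(x,y)∼D}[sign⟨w, x⟩ = y] ≤ p + n/(d−1); in particular, its population accuracy is at most 1/2 + n/(d−1). -/

import Mathlib

open Matrix MeasureTheory
open scoped ENNReal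

noncomputable section

/-- The sign `±1 : ℝ` of a Boolean. -/
def sgnB (b : Bool) : ℝ := if b then 1 else -1

/-- The data vector `x = η·y·e₁ + e_k ∈ ℝ^d`, where the coordinate `k ∈ {2,…,d}` is
represented (0-indexed) by an element of `Fin (d−1)`: `e₁` is coordinate `0` and `e_k`
is coordinate `k + 1`. -/
def dataX (d : ℕ) (y η : Bool) (k : Fin (d - 1)) : Fin d → ℝ := fun i =>
  (if (i : ℕ) = 0 then sgnB η * sgnB y else 0) +
    (if (i : ℕ) = (k : ℕ) + 1 then 1 else 0)

/-- The joint distribution of the latent variables `(y, k, η)` of a single sample from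
`D`: `y` uniform on `{−1,+1}`, `k` uniform on `{2,…,d}`, and `η = +1` with probability
`1 − p`, all independent (Booleans encode `true ↦ +1`, `false ↦ −1`). -/
def paramPMF (p : ℝ) (hp : 0 ≤ p) (d : ℕ) (hd : 2 ≤ d) :
    PMF (Bool × Fin (d - 1) × Bool) :=
  haveI : Nonempty (Fin (d - 1)) := ⟨⟨0, by omega⟩⟩
  (PMF.uniformOfFintype Bool).bind fun y =>
    (PMF.uniformOfFintype (Fin (d - 1))).bind fun k =>
      (PMF.bernoulli (Real.toNNReal (1 - p))
        (by rw [Real.toNNReal_le_one]; linarith)).map fun η => (y, k, η)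

/-- The data distribution `D` on `ℝ^d × {−1,+1} ⊆ ℝ^d × ℝ`:
the law of `(x, y) = (η·y·e₁ + e_k, y)`. -/
def popD (p : ℝ) (hp : 0 ≤ p) (d : ℕ) (hd : 2 ≤ d) : Measure ((Fin d → ℝ) × ℝ) :=
  ((paramPMF p hp d hd).map fun t => (dataX d t.1 t.2.2 t.2.1, sgnB t.1)).toMeasure

/-- The population accuracy `P_{(x,y)∼D}[sign⟨w, x⟩ = y]` of the linear classifier
`x ↦ sign⟨w, x⟩`, where `sign t = +1` if `t > 0` and `−1` otherwise. -/
def popAcc (p : ℝ) (hp : 0 ≤ p) (d : ℕ) (hd : 2 ≤ d) (w : Fin d → ℝ) : ℝ≥0∞ :=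
  popD p hp d hd {q | (if 0 < w ⬝ᵥ q.1 then (1 : ℝ) else -1) = q.2}

end

section Aux

lemma paramPMF_apply (p : ℝ) (hp : 0 ≤ p) (d : ℕ) (hd : 2 ≤ d)
    (y : Bool) (κ : Fin (d - 1)) (η : Bool) :
    paramPMF p hp d hd (y, κ, η) =
      2⁻¹ * ((d : ℝ≥0∞) - 1)⁻¹ *
        (if η then ENNReal.ofReal (1 - p) else 1 - ENNReal.ofReal (1 - p)) := by
  haveI : Nonempty (Fin (d - 1)) := ⟨⟨0, by omega⟩⟩
  simp only [paramPMF, PMF.bind_apply, PMF.map_apply, PMF.uniformOfFintype_apply,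
    Fintype.card_bool, Fintype.card_fin, tsum_fintype, PMF.bernoulli_apply]
  rw [Finset.sum_eq_single y, Finset.sum_eq_single κ]
  · rw [Finset.sum_eq_single η]
    · have : ((d - 1 : ℕ) : ℝ≥0∞) = (d : ℝ≥0∞) - 1 := by
        exact_mod_cast ENNReal.natCast_sub d 1
      rw [this]; cases η <;> simp [mul_assoc] <;> rfl
    · intro c _ hc; simp [Prod.ext_iff, hc.symm]
    · simp
  · intro b _ hb
    rw [Finset.sum_eq_zero]
    · ring
    intro c _
    simp [Prod.ext_iff, hb.symm]
  · simp
  · intro b _ hb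
    rw [Finset.sum_eq_zero]
    · ring
    intro c _
    rw [Finset.sum_eq_zero]
    · ring
    intro e _
    simp [Prod.ext_iff, hb.symm]
  · simp

lemma dot_if_single {d : ℕ} (w : Fin d → ℝ) (c : Fin d) (a : ℝ) :
    (∑ i, w i * (if (i : ℕ) = (c : ℕ) then a else 0)) = w c * a := by
  rw [Finset.sum_eq_single c]
  · simp
  · intro b _ hb; rw [if_neg (fun h => hb (Fin.ext h)), mul_zero]
  · simp

lemma dot_dataX {d : ℕ} (hd : 2 ≤ d) (w : Fin d → ℝ) (y η : Bool) (κ : Fin (d - 1)) :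
    w ⬝ᵥ dataX d y η κ =
      w ⟨0, by omega⟩ * (sgnB η * sgnB y) + w ⟨(κ : ℕ) + 1, by omega⟩ := by
  have hκ : (κ : ℕ) + 1 < d := by have := κ.2; omega
  simp only [dotProduct, dataX, mul_add]
  rw [Finset.sum_add_distrib,
    dot_if_single w ⟨0, by omega⟩ (sgnB η * sgnB y),
    dot_if_single w ⟨(κ : ℕ) + 1, hκ⟩ 1, mul_one]

lemma sub_ofReal_one_sub (p : ℝ) (hp0 : 0 ≤ p) (hp1 : p ≤ 1) :
    1 - ENNReal.ofReal (1 - p) = ENNReal.ofReal p := by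
  rw [ENNReal.sub_eq_of_eq_add ENNReal.ofReal_ne_top]
  rw [← ENNReal.ofReal_add hp0 (by linarith), ← ENNReal.ofReal_one]
  norm_num

end Aux

theorem stmt_12 {n d : ℕ} (hnd : n + 1 ≤ d) (hd : 2 ≤ d)
    (p : ℝ) (hp0 : 0 ≤ p) (hp : p ≤ 1 / 2)
    (s : Fin n → ℝ) (hs : ∀ j, s j = 1 ∨ s j = -1)
    (k : Fin n → Fin d) (hkinj : Function.Injective k) (hk1 : ∀ j, 1 ≤ (k j : ℕ))
    (X : Matrix (Fin n) (Fin d) ℝ)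
    (hX : ∀ j, (X j : Fin d → ℝ) =
      s j • (Pi.single (⟨0, by omega⟩ : Fin d) 1 : Fin d → ℝ) +
        (Pi.single (k j) 1 : Fin d → ℝ)) :
    ∃ w : Fin d → ℝ,
      (∀ j, w ⬝ᵥ (X j : Fin d → ℝ) = 1) ∧
      popAcc p hp0 d hd w ≤ ENNReal.ofReal (p + (n : ℝ) / ((d : ℝ) - 1)) ∧
      popAcc p hp0 d hd w ≤ ENNReal.ofReal (1 / 2 + (n : ℝ) / ((d : ℝ) - 1)) := by
  classical
  set e0 : Fin d := ⟨0, by omega⟩ with he0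
  -- the poor ERM
  set w : Fin d → ℝ :=
    fun i => if (i : ℕ) = 0 then -1 else ∑ j, (if k j = i then 1 + s j else 0) with hw
  have hw0 : w e0 = -1 := by simp [hw, he0]
  have hwk : ∀ j, w (k j) = 1 + s j := by
    intro j
    have hkj0 : ((k j : ℕ) : ℕ) ≠ 0 := by have := hk1 j; omega
    simp only [hw, if_neg hkj0]
    rw [Finset.sum_eq_single j]
    · simp
    · intro b _ hb; rw [if_neg (fun h => hb (hkinj h))]
    · simp
  have hERM : ∀ j, w ⬝ᵥ (X j : Fin d → ℝ) = 1 := by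
    intro j
    rw [hX j]
    rw [dotProduct_add, dotProduct_smul]
    rw [dotProduct_single, dotProduct_single, mul_one, mul_one]
    rw [hw0, hwk j]
    simp only [smul_eq_mul]
    ring
  refine ⟨w, hERM, ?_⟩
  -- population accuracy bound
  have hp1 : p ≤ 1 := by linarith
  set S : Set ((Fin d → ℝ) × ℝ) :=
    {q | (if 0 < w ⬝ᵥ q.1 then (1 : ℝ) else -1) = q.2} with hS
  have hSm : MeasurableSet S := by
    have hg : Measurable fun q : (Fin d → ℝ) × ℝ =>
        (if 0 < w ⬝ᵥ q.1 then (1 : ℝ) else -1) := by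
      have hdot : Measurable fun q : (Fin d → ℝ) × ℝ => w ⬝ᵥ q.1 := by
        simp only [dotProduct]
        exact Finset.measurable_sum _ fun i _ =>
          measurable_const.mul ((measurable_pi_apply i).comp measurable_fst)
      exact Measurable.ite (measurableSet_lt measurable_const hdot)
        measurable_const measurable_const
    exact measurableSet_eq_fun hg measurable_snd
  have key : popAcc p hp0 d hd w =
      (paramPMF p hp0 d hd).toMeasure
        ((fun t : Bool × Fin (d - 1) × Bool =>
          (dataX d t.1 t.2.2 t.2.1, sgnB t.1)) ⁻¹' S) := by
    rw [popAcc, popD, PMF.toMeasure_map_apply _ _ _ .of_discrete hSm]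
  -- the two bad events
  set A : Set (Bool × Fin (d - 1) × Bool) := {t | t.2.2 = false} with hA
  set B : Set (Bool × Fin (d - 1) × Bool) :=
    {t | ∃ j, (k j : ℕ) = (t.2.1 : ℕ) + 1} with hB
  have hsub : ((fun t : Bool × Fin (d - 1) × Bool =>
      (dataX d t.1 t.2.2 t.2.1, sgnB t.1)) ⁻¹' S) ⊆ A ∪ B := by
    rintro ⟨y, κ, η⟩ ht
    by_cases hκB : ∃ j, (k j : ℕ) = (κ : ℕ) + 1
    · exact Or.inr hκB
    left
    -- here w at coordinate κ+1 is 0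
    have hκ1 : (⟨(κ : ℕ) + 1, by have := κ.2; omega⟩ : Fin d) ≠ e0 := by
      simp [Fin.ext_iff, he0]
    have hwκ : w ⟨(κ : ℕ) + 1, by have := κ.2; omega⟩ = 0 := by
      simp only [hw]
      rw [if_neg (by simp)]
      exact Finset.sum_eq_zero fun j _ => by
        rw [if_neg]
        intro h
        exact hκB ⟨j, by rw [h]⟩
    have hval : w ⬝ᵥ dataX d y η κ = -(sgnB η * sgnB y) := by
      rw [dot_dataX hd w y η κ, hwκ, add_zero]
      have : w ⟨0, by omega⟩ = -1 := hw0
      rw [this]; ring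
    have hmem : (if 0 < w ⬝ᵥ dataX d y η κ then (1 : ℝ) else -1) = sgnB y := ht
    by_contra hη
    have hη' : η = true := by
      cases η
      · exact absurd rfl hη
      · rfl
    rw [hval, hη'] at hmem
    cases y <;> simp [sgnB] at hmem <;> norm_num at hmem
  -- measures of the bad events
  have hcast : ((d - 1 : ℕ) : ℝ≥0∞) = (d : ℝ≥0∞) - 1 := by
    exact_mod_cast ENNReal.natCast_sub d 1
  have hd1ne0 : ((d : ℝ≥0∞) - 1) ≠ 0 := by
    rw [← hcast]
    exact_mod_cast Nat.cast_ne_zero.mpr (by omega : d - 1 ≠ 0)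
  have hd1netop : ((d : ℝ≥0∞) - 1) ≠ ⊤ :=
    ENNReal.sub_ne_top (ENNReal.natCast_ne_top d)
  have hcancel : ((d : ℝ≥0∞) - 1) * ((d : ℝ≥0∞) - 1)⁻¹ = 1 :=
    ENNReal.mul_inv_cancel hd1ne0 hd1netop
  have hofR : ENNReal.ofReal (1 - p) ≤ 1 := by
    rw [ENNReal.ofReal_le_one]; linarith
  set q : ℝ≥0∞ := 1 - ENNReal.ofReal (1 - p) with hq
  set c : ℝ≥0∞ := 2⁻¹ * ((d : ℝ≥0∞) - 1)⁻¹ with hc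
  -- measure of A
  have hμA : (paramPMF p hp0 d hd).toMeasure A = ENNReal.ofReal p := by
    rw [PMF.toMeasure_apply_fintype, Fintype.sum_prod_type]
    have hy : ∀ y : Bool, ∑ z : Fin (d - 1) × Bool,
        A.indicator (⇑(paramPMF p hp0 d hd)) (y, z) = ((d : ℝ≥0∞) - 1) * (c * q) := by
      intro y
      rw [Fintype.sum_prod_type]
      have hκ : ∀ κ : Fin (d - 1), ∑ η : Bool,
          A.indicator (⇑(paramPMF p hp0 d hd)) (y, κ, η) = c * q := by
        intro κ
        rw [Fintype.sum_bool]
        have ht : A.indicator (⇑(paramPMF p hp0 d hd)) (y, κ, true) = 0 :=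
          Set.indicator_of_notMem (by simp [hA]) _
        have hf : A.indicator (⇑(paramPMF p hp0 d hd)) (y, κ, false) =
            paramPMF p hp0 d hd (y, κ, false) :=
          Set.indicator_of_mem (by simp [hA]) _
        rw [ht, hf, paramPMF_apply, zero_add, if_neg (by simp)]
      rw [Finset.sum_congr rfl fun κ _ => hκ κ, Finset.sum_const, Finset.card_univ,
        Fintype.card_fin, nsmul_eq_mul, hcast]
    rw [Fintype.sum_bool, hy, hy]
    have : ((d : ℝ≥0∞) - 1) * (c * q) + ((d : ℝ≥0∞) - 1) * (c * q)
        = (2 * 2⁻¹) * (((d : ℝ≥0∞) - 1) * ((d : ℝ≥0∞) - 1)⁻¹) * q := by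
      rw [hc]; ring
    rw [this, hcancel, ENNReal.mul_inv_cancel two_ne_zero ENNReal.ofNat_ne_top,
      one_mul, one_mul, hq, sub_ofReal_one_sub p hp0 hp1]
  -- measure of B
  set K : Finset (Fin (d - 1)) :=
    Finset.univ.filter (fun κ => ∃ j, (k j : ℕ) = (κ : ℕ) + 1) with hK
  have hKcard : K.card ≤ n := by
    have hsubK : K ⊆ Finset.univ.image
        (fun j : Fin n => (⟨(k j : ℕ) - 1, by have := (k j).2; have := hk1 j; omega⟩ :
          Fin (d - 1))) := by
      intro κ hκ
      rw [hK, Finset.mem_filter] at hκ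
      obtain ⟨j, hj⟩ := hκ.2
      exact Finset.mem_image.mpr ⟨j, Finset.mem_univ _, by
        apply Fin.ext; simp; omega⟩
    calc K.card ≤ _ := Finset.card_le_card hsubK
      _ ≤ n := le_trans Finset.card_image_le (by simp)
  have hμB : (paramPMF p hp0 d hd).toMeasure B ≤ (n : ℝ≥0∞) * ((d : ℝ≥0∞) - 1)⁻¹ := by
    rw [PMF.toMeasure_apply_fintype, Fintype.sum_prod_type]
    have hy : ∀ y : Bool, ∑ z : Fin (d - 1) × Bool,
        B.indicator (⇑(paramPMF p hp0 d hd)) (y, z) = (K.card : ℝ≥0∞) * c := by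
      intro y
      rw [Fintype.sum_prod_type]
      have hκ : ∀ κ : Fin (d - 1), ∑ η : Bool,
          B.indicator (⇑(paramPMF p hp0 d hd)) (y, κ, η) =
          if (∃ j, (k j : ℕ) = (κ : ℕ) + 1) then c else 0 := by
        intro κ
        by_cases hmem : ∃ j, (k j : ℕ) = (κ : ℕ) + 1
        · rw [if_pos hmem, Fintype.sum_bool]
          rw [Set.indicator_of_mem (by simpa [hB] using hmem) _,
            Set.indicator_of_mem (by simpa [hB] using hmem) _,
            paramPMF_apply, paramPMF_apply, if_pos rfl, if_neg (by simp)]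
          rw [← mul_add, add_tsub_cancel_of_le hofR, mul_one]
        · rw [if_neg hmem, Fintype.sum_bool]
          rw [Set.indicator_of_notMem (by simpa [hB] using hmem) _,
            Set.indicator_of_notMem (by simpa [hB] using hmem) _, add_zero]
      rw [Finset.sum_congr rfl fun κ _ => hκ κ, ← Finset.sum_filter, ← hK,
        Finset.sum_const, nsmul_eq_mul]
    rw [Fintype.sum_bool, hy, hy]
    have heq : (K.card : ℝ≥0∞) * c + (K.card : ℝ≥0∞) * c
        = (K.card : ℝ≥0∞) * ((2 * 2⁻¹) * ((d : ℝ≥0∞) - 1)⁻¹) := by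
      rw [hc]; ring
    rw [heq, ENNReal.mul_inv_cancel two_ne_zero ENNReal.ofNat_ne_top, one_mul]
    exact mul_le_mul_left (by exact_mod_cast hKcard) _
  -- conclude
  have hfrac : (n : ℝ≥0∞) * ((d : ℝ≥0∞) - 1)⁻¹
      = ENNReal.ofReal ((n : ℝ) / ((d : ℝ) - 1)) := by
    have hdpos : (0 : ℝ) < (d : ℝ) - 1 := by
      have : (2 : ℝ) ≤ (d : ℝ) := by exact_mod_cast hd
      linarith
    rw [ENNReal.ofReal_div_of_pos hdpos, ENNReal.ofReal_natCast]
    have : ((d : ℝ) - 1) = ((d - 1 : ℕ) : ℝ) := by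
      rw [Nat.cast_sub (by omega)]; norm_num
    rw [this, ENNReal.ofReal_natCast, hcast, div_eq_mul_inv]
  have hfracnn : (0 : ℝ) ≤ (n : ℝ) / ((d : ℝ) - 1) := by
    apply div_nonneg (Nat.cast_nonneg n)
    have : (2 : ℝ) ≤ (d : ℝ) := by exact_mod_cast hd
    linarith
  have hmain : popAcc p hp0 d hd w ≤ ENNReal.ofReal (p + (n : ℝ) / ((d : ℝ) - 1)) := by
    rw [key]
    refine le_trans (measure_mono hsub) ?_
    refine le_trans (measure_union_le A B) ?_
    rw [hμA]
    refine le_trans (add_le_add_right hμB _) ?_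
    rw [hfrac, ← ENNReal.ofReal_add hp0 hfracnn]
  refine ⟨hmain, le_trans hmain (ENNReal.ofReal_le_ofReal ?_)⟩
  linarith
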